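/- Let C be a 2-category and W a class of 1-morphisms satisfying (BF1)–(BF5). Let f^m = (A^m, w^m, f^m) : A → B (m = 1, 2) be 1-morphisms of the bicategory of fractions and Γ, Γ' two 2-morphisms from f¹ to f² (equivalence classes of quintuples as in Pronk). Then there exist an object A³, a morphism v¹ : A³ → A¹ in W, a morphism v² : A³ → A², an invertible 2-morphism α : w¹ ∘ v¹ ⇒ w² ∘ v², and 2-morphisms γ, γ' : f¹ ∘ v¹ ⇒ f² ∘ v² such that Γ = [A³, v¹, v², α, γ] and Γ' = [A³, v¹, v², α, γ']; that is, any two parallel 2-morphisms of the bicategory of fractions admit representatives differing at most in the last component. -/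

import Mathlib

open CategoryTheory CategoryTheory.Bicategory

universe w v u


/-- Pronk's axioms (BF1)–(BF5) for a right bicalculus of fractions on a class `W`
of 1-morphisms of a bicategory. -/
structure PronkBF {B : Type u} [Bicategory.{w, v} B]
    (W : ∀ ⦃X Y : B⦄, (X ⟶ Y) → Prop) : Prop where
  bf1 : ∀ X : B, W (𝟙 X)
  bf2 : ∀ {X Y Z : B} (f : X ⟶ Y) (g : Y ⟶ Z), W f → W g → W (f ≫ g)
  bf3 : ∀ {X Y Z : B} (wm : X ⟶ Y) (f : Z ⟶ Y), W wm →
      ∃ (D : B) (w' : D ⟶ Z) (f' : D ⟶ X), W w' ∧ Nonempty (w' ≫ f ≅ f' ≫ wm)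
  bf4a : ∀ {X Y Z : B} (wm : Y ⟶ X) (f₁ f₂ : Z ⟶ Y) (α : f₁ ≫ wm ⟶ f₂ ≫ wm), W wm →
      ∃ (D : B) (vm : D ⟶ Z) (β : vm ≫ f₁ ⟶ vm ≫ f₂), W vm ∧
        vm ◁ α = (α_ vm f₁ wm).inv ≫ β ▷ wm ≫ (α_ vm f₂ wm).hom
  bf4b : ∀ {X Y Z : B} (wm : Y ⟶ X) (f₁ f₂ : Z ⟶ Y) (α : f₁ ≫ wm ⟶ f₂ ≫ wm), W wm → IsIso α →
      ∃ (D : B) (vm : D ⟶ Z) (β : vm ≫ f₁ ⟶ vm ≫ f₂), W vm ∧ IsIso β ∧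
        vm ◁ α = (α_ vm f₁ wm).inv ≫ β ▷ wm ≫ (α_ vm f₂ wm).hom
  bf4c : ∀ {X Y Z : B} (wm : Y ⟶ X) (f₁ f₂ : Z ⟶ Y) (α : f₁ ≫ wm ⟶ f₂ ≫ wm)
      {D D' : B} (vm : D ⟶ Z) (β : vm ≫ f₁ ⟶ vm ≫ f₂)
      (vm' : D' ⟶ Z) (β' : vm' ≫ f₁ ⟶ vm' ≫ f₂),
      W wm → W vm → W vm' →
      (vm ◁ α = (α_ vm f₁ wm).inv ≫ β ▷ wm ≫ (α_ vm f₂ wm).hom) →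
      (vm' ◁ α = (α_ vm' f₁ wm).inv ≫ β' ▷ wm ≫ (α_ vm' f₂ wm).hom) →
      ∃ (E : B) (um : E ⟶ D) (um' : E ⟶ D') (ζ : um ≫ vm ≅ um' ≫ vm'),
        W (um ≫ vm) ∧
        ζ.hom ▷ f₁ ≫ (α_ um' vm' f₁).hom ≫ um' ◁ β' ≫ (α_ um' vm' f₂).inv
          = (α_ um vm f₁).hom ≫ um ◁ β ≫ (α_ um vm f₂).inv ≫ ζ.hom ▷ f₂
  bf5 : ∀ {X Y : B} (vm wm : X ⟶ Y), W wm → Nonempty (vm ≅ wm) → W vm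
variable {B : Type u} [Bicategory.{w, v} B]

/-- The data of a representative of a 2-morphism in Pronk's bicategory of fractions:
a quintuple `(obj, v₁, v₂, α, β)`. -/
structure PronkSq {A Bb A₁ A₂ : B}
    (w₁ : A₁ ⟶ A) (f₁ : A₁ ⟶ Bb) (w₂ : A₂ ⟶ A) (f₂ : A₂ ⟶ Bb) where
  obj : B
  v₁ : obj ⟶ A₁
  v₂ : obj ⟶ A₂
  α : v₁ ≫ w₁ ⟶ v₂ ≫ w₂
  β : v₁ ≫ f₁ ⟶ v₂ ≫ f₂

/-- Pronk's relation on quintuples representing 2-morphisms of the bicategory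
of fractions. -/
def PronkRel (W : ∀ ⦃X Y : B⦄, (X ⟶ Y) → Prop) {A Bb A₁ A₂ : B}
    (w₁ : A₁ ⟶ A) (f₁ : A₁ ⟶ Bb) (w₂ : A₂ ⟶ A) (f₂ : A₂ ⟶ Bb)
    (Q Q' : PronkSq w₁ f₁ w₂ f₂) : Prop :=
  ∃ (A₄ : B) (z : A₄ ⟶ Q.obj) (z' : A₄ ⟶ Q'.obj)
    (σ₁ : z' ≫ Q'.v₁ ≅ z ≫ Q.v₁) (σ₂ : z ≫ Q.v₂ ≅ z' ≫ Q'.v₂),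
    W ((z ≫ Q.v₁) ≫ w₁) ∧
    (σ₁.hom ▷ w₁ ≫ (α_ z Q.v₁ w₁).hom ≫ z ◁ Q.α ≫ (α_ z Q.v₂ w₂).inv ≫ σ₂.hom ▷ w₂
       = (α_ z' Q'.v₁ w₁).hom ≫ z' ◁ Q'.α ≫ (α_ z' Q'.v₂ w₂).inv) ∧
    (σ₁.hom ▷ f₁ ≫ (α_ z Q.v₁ f₁).hom ≫ z ◁ Q.β ≫ (α_ z Q.v₂ f₂).inv ≫ σ₂.hom ▷ f₂
       = (α_ z' Q'.v₁ f₁).hom ≫ z' ◁ Q'.β ≫ (α_ z' Q'.v₂ f₂).inv)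
/-- Helper: if a quintuple `⟨N, V₁, V₂, α, γ⟩` is obtained from `Q` by an honest
refinement along `z` (with genuine invertible 2-cells `σ₁`, `σ₂` upstairs), then for a
suitable `γ` it is related to `Q` by Pronk's relation. -/
private lemma rel_of_iso {B : Type u} [Bicategory.{w, v} B] [Bicategory.Strict B]
    (W : ∀ ⦃X Y : B⦄, (X ⟶ Y) → Prop)
    {A Bb A₁ A₂ : B} {w₁ : A₁ ⟶ A} {f₁ : A₁ ⟶ Bb} {w₂ : A₂ ⟶ A} {f₂ : A₂ ⟶ Bb}
    (Q : PronkSq w₁ f₁ w₂ f₂) {N : B} (z : N ⟶ Q.obj)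
    {V₁ : N ⟶ A₁} {V₂ : N ⟶ A₂} (α : V₁ ≫ w₁ ⟶ V₂ ≫ w₂)
    (σ₁ : V₁ ≅ z ≫ Q.v₁) (σ₂ : z ≫ Q.v₂ ≅ V₂)
    (hW : W ((z ≫ Q.v₁) ≫ w₁))
    (hα : σ₁.hom ▷ w₁ ≫ (α_ z Q.v₁ w₁).hom ≫ z ◁ Q.α ≫ (α_ z Q.v₂ w₂).inv ≫ σ₂.hom ▷ w₂
        = α) :
    ∃ γ : V₁ ≫ f₁ ⟶ V₂ ≫ f₂,
      PronkRel W w₁ f₁ w₂ f₂ Q ⟨N, V₁, V₂, α, γ⟩ := by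
  refine ⟨σ₁.hom ▷ f₁ ≫ (α_ z Q.v₁ f₁).hom ≫ z ◁ Q.β ≫ (α_ z Q.v₂ f₂).inv ≫ σ₂.hom ▷ f₂,
    N, z, 𝟙 N, eqToIso (by simp) ≪≫ σ₁, σ₂ ≪≫ eqToIso (by simp), hW, ?_, ?_⟩
  · rw [← hα]
    simp [Bicategory.Strict.associator_eqToIso, Bicategory.Strict.leftUnitor_eqToIso,
      Bicategory.Strict.rightUnitor_eqToIso]
  · simp [Bicategory.Strict.associator_eqToIso, Bicategory.Strict.leftUnitor_eqToIso,
      Bicategory.Strict.rightUnitor_eqToIso]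

/-- Proposition prop-05, first part: any two parallel 2-morphisms of the
bicategory of fractions admit representatives differing at most in the last component. -/
theorem statement7 {B : Type u} [Bicategory.{w, v} B] [Bicategory.Strict B]
    (W : ∀ ⦃X Y : B⦄, (X ⟶ Y) → Prop) (hBF : PronkBF W)
    {A Bb A₁ A₂ : B}
    (w₁ : A₁ ⟶ A) (f₁ : A₁ ⟶ Bb) (w₂ : A₂ ⟶ A) (f₂ : A₂ ⟶ Bb)
    (hw₁ : W w₁) (hw₂ : W w₂)
    (Γ Γ' : PronkSq w₁ f₁ w₂ f₂)
    (hΓ : W (Γ.v₁ ≫ w₁)) (hΓα : IsIso Γ.α)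
    (hΓ' : W (Γ'.v₁ ≫ w₁)) (hΓ'α : IsIso Γ'.α) :
    ∃ (A₃ : B) (v₁ : A₃ ⟶ A₁) (v₂ : A₃ ⟶ A₂) (α : v₁ ≫ w₁ ⟶ v₂ ≫ w₂)
      (γ γ' : v₁ ≫ f₁ ⟶ v₂ ≫ f₂),
      W v₁ ∧ IsIso α ∧
      PronkRel W w₁ f₁ w₂ f₂ Γ ⟨A₃, v₁, v₂, α, γ⟩ ∧
      PronkRel W w₁ f₁ w₂ f₂ Γ' ⟨A₃, v₁, v₂, α, γ'⟩ := by
  haveI := hΓα; haveI := hΓ'α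
  -- Step 1: a square comparing `w₁` with `Γ.v₁ ≫ w₁ ∈ W`, giving a leg into `A₁` in `W`.
  obtain ⟨D, a, p, ha, ⟨φ⟩⟩ := hBF.bf3 (Γ.v₁ ≫ w₁) w₁ hΓ
  -- Step 2: lift the comparison 2-cell above `w₁`.
  obtain ⟨E₁, u₁, β₁, hu₁, hβ₁, -⟩ :=
    hBF.bf4b w₁ a (p ≫ Γ.v₁) (φ.hom ≫ eqToHom (by simp)) hw₁ inferInstance
  haveI := hβ₁
  -- Step 3: a square comparing the new leg with `Γ'.v₁ ≫ w₁ ∈ W`.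
  obtain ⟨D', b, p', hb, ⟨φ'⟩⟩ := hBF.bf3 (Γ'.v₁ ≫ w₁) ((u₁ ≫ a) ≫ w₁) hΓ'
  -- Step 4: lift the comparison 2-cell above `w₁`.
  obtain ⟨E₂, u₂, β₂, hu₂, hβ₂, -⟩ :=
    hBF.bf4b w₁ (b ≫ u₁ ≫ a) (p' ≫ Γ'.v₁)
      (eqToHom (by simp) ≫ φ'.hom ≫ eqToHom (by simp)) hw₁ inferInstance
  haveI := hβ₂
  obtain ⟨ε₀, hεdef⟩ : ∃ t : u₂ ≫ b ≫ u₁ ≫ a ⟶ (u₂ ≫ b ≫ u₁ ≫ p) ≫ Γ.v₁,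
      t = u₂ ◁ b ◁ β₁ ≫ eqToHom (by simp) := ⟨_, rfl⟩
  obtain ⟨ε', hε'def⟩ : ∃ t : u₂ ≫ b ≫ u₁ ≫ a ⟶ (u₂ ≫ p') ≫ Γ'.v₁,
      t = β₂ ≫ eqToHom (by simp) := ⟨_, rfl⟩
  haveI : IsIso ε₀ := by rw [hεdef]; infer_instance
  haveI : IsIso ε' := by rw [hε'def]; infer_instance
  obtain ⟨θ, hθdef⟩ : ∃ t : (u₂ ≫ b ≫ u₁ ≫ a) ≫ w₁ ⟶ ((u₂ ≫ b ≫ u₁ ≫ p) ≫ Γ.v₂) ≫ w₂,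
      t = ε₀ ▷ w₁ ≫ eqToHom (by simp) ≫ (u₂ ≫ b ≫ u₁ ≫ p) ◁ Γ.α ≫ eqToHom (by simp) :=
    ⟨_, rfl⟩
  obtain ⟨θ', hθ'def⟩ : ∃ t : (u₂ ≫ b ≫ u₁ ≫ a) ≫ w₁ ⟶ ((u₂ ≫ p') ≫ Γ'.v₂) ≫ w₂,
      t = ε' ▷ w₁ ≫ eqToHom (by simp) ≫ (u₂ ≫ p') ◁ Γ'.α ≫ eqToHom (by simp) :=
    ⟨_, rfl⟩
  haveI : IsIso θ := by rw [hθdef]; infer_instance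
  haveI : IsIso θ' := by rw [hθ'def]; infer_instance
  -- Step 5: merge the two candidate second legs above `w₂`.
  obtain ⟨E₃, u₃, δ, hu₃, hδiso, hc₃⟩ :=
    hBF.bf4b w₂ ((u₂ ≫ b ≫ u₁ ≫ p) ≫ Γ.v₂) ((u₂ ≫ p') ≫ Γ'.v₂) (inv θ ≫ θ') hw₂
      inferInstance
  haveI := hδiso
  have hδw : δ ▷ w₂ =
      (α_ u₃ ((u₂ ≫ b ≫ u₁ ≫ p) ≫ Γ.v₂) w₂).hom ≫ u₃ ◁ (inv θ ≫ θ') ≫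
        (α_ u₃ ((u₂ ≫ p') ≫ Γ'.v₂) w₂).inv := by
    rw [hc₃]; simp
  have hcancel : ∀ {c : E₃ ⟶ A} (g : u₃ ≫ (u₂ ≫ b ≫ u₁ ≫ a) ≫ w₁ ⟶ c),
      u₃ ◁ θ ≫ u₃ ◁ inv θ ≫ g = g := by
    intro c g
    rw [← Bicategory.inv_whiskerLeft, IsIso.hom_inv_id_assoc]
  obtain ⟨αf, hαfdef⟩ :
      ∃ t : (u₃ ≫ u₂ ≫ b ≫ u₁ ≫ a) ≫ w₁ ⟶ (u₃ ≫ (u₂ ≫ p') ≫ Γ'.v₂) ≫ w₂,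
        t = eqToHom (by simp) ≫ u₃ ◁ θ' ≫ eqToHom (by simp) := ⟨_, rfl⟩
  haveI : IsIso αf := by rw [hαfdef]; infer_instance
  have hV₁ : W (u₃ ≫ u₂ ≫ b ≫ u₁ ≫ a) :=
    hBF.bf2 _ _ hu₃ (hBF.bf2 _ _ hu₂ (hBF.bf2 _ _ hb (hBF.bf2 _ _ hu₁ ha)))
  -- the two relations
  obtain ⟨γ, hrel⟩ :=
    rel_of_iso (W := W) Γ (u₃ ≫ u₂ ≫ b ≫ u₁ ≫ p) αf
      (whiskerLeftIso u₃ (asIso ε₀) ≪≫ eqToIso (by simp))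
      (eqToIso (by simp) ≪≫ asIso δ ≪≫ eqToIso (by simp))
      (hBF.bf5 _ _ (hBF.bf2 _ _ hV₁ hw₁)
        ⟨whiskerRightIso (whiskerLeftIso u₃ (asIso ε₀) ≪≫ eqToIso (by simp)).symm w₁⟩)
      (by
        simp only [Iso.trans_hom, whiskerLeftIso_hom, asIso_hom, eqToIso.hom,
          Bicategory.comp_whiskerRight, Category.assoc]
        rw [hδw]
        refine Eq.trans ?_ (b := eqToHom (by simp) ≫ u₃ ◁ θ ≫ u₃ ◁ inv θ ≫ u₃ ◁ θ' ≫
          eqToHom (by simp)) ?_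
        · simp only [hθdef, hεdef]
          simp [Bicategory.Strict.associator_eqToIso, Bicategory.Strict.leftUnitor_eqToIso,
            Bicategory.Strict.rightUnitor_eqToIso]
        · rw [hcancel, hαfdef])
  obtain ⟨γ', hrel'⟩ :=
    rel_of_iso (W := W) Γ' (u₃ ≫ u₂ ≫ p') αf
      (whiskerLeftIso u₃ (asIso ε') ≪≫ eqToIso (by simp))
      (eqToIso (by simp))
      (hBF.bf5 _ _ (hBF.bf2 _ _ hV₁ hw₁)
        ⟨whiskerRightIso (whiskerLeftIso u₃ (asIso ε') ≪≫ eqToIso (by simp)).symm w₁⟩)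
      (by
        simp only [Iso.trans_hom, whiskerLeftIso_hom, asIso_hom, eqToIso.hom]
        simp only [hαfdef, hθ'def, hε'def]
        simp [Bicategory.Strict.associator_eqToIso, Bicategory.Strict.leftUnitor_eqToIso,
          Bicategory.Strict.rightUnitor_eqToIso])
  exact ⟨E₃, _, _, αf, γ, γ', hV₁, ‹IsIso αf›, hrel, hrel'⟩
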